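/- arXiv:1908.10935 — 2 statements merged into one kernel-verified Lean document; each statement's English description precedes it below -/
import Mathlib

section
/- For any two real random variables X and Y, sup over θ ∈ ℝ of |E[Y·tanh(θY)] − E[X·tanh(θX)]|/|θ| is at most the 1-Wasserstein distance between the laws of X² and Y². -/
open MeasureTheory

/-- 1-Wasserstein distance: infimum of `E|X − Y|` over couplings. -/
noncomputable def W1 (μ ν : Measure ℝ) : ℝ :=
  sInf {r : ℝ | ∃ π : Measure (ℝ × ℝ),
    π.map Prod.fst = μ ∧ π.map Prod.snd = ν ∧ r = ∫ p, |p.1 - p.2| ∂π}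

lemma hasDerivAt_tanh (x : ℝ) : HasDerivAt Real.tanh (1 / Real.cosh x ^ 2) x := by
  have h : HasDerivAt Real.tanh
      ((Real.cosh x * Real.cosh x - Real.sinh x * Real.sinh x) / Real.cosh x ^ 2) x := by
    have := (Real.hasDerivAt_sinh x).div (Real.hasDerivAt_cosh x) (ne_of_gt (Real.cosh_pos x))
    refine this.congr_of_eventuallyEq (Filter.Eventually.of_forall fun y => ?_)
    exact Real.tanh_eq_sinh_div_cosh y
  convert h using 1
  rw [← Real.cosh_sq_sub_sinh_sq x]; ring

lemma tanh_lipschitz (x y : ℝ) : |Real.tanh x - Real.tanh y| ≤ |x - y| := by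
  have h := lipschitzWith_of_nnnorm_deriv_le (C := 1)
    (fun x => (hasDerivAt_tanh x).differentiableAt)
    (fun x => by
      rw [(hasDerivAt_tanh x).deriv]
      rw [← NNReal.coe_le_coe, coe_nnnorm, Real.norm_eq_abs, NNReal.coe_one]
      rw [abs_of_nonneg (by positivity)]
      rw [div_le_one (by positivity)]
      nlinarith [Real.one_le_cosh x])
  have := h.dist_le_mul x y
  simpa [Real.dist_eq] using this

lemma tanh_strictMono : StrictMono Real.tanh := by
  apply strictMono_of_deriv_pos
  intro x
  rw [(hasDerivAt_tanh x).deriv]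
  positivity

lemma abs_tanh_le (x : ℝ) : |Real.tanh x| ≤ |x| := by
  simpa [Real.tanh_zero] using tanh_lipschitz x 0

lemma core_nonneg (θ a b : ℝ) (hθ : 0 ≤ θ) (ha : 0 ≤ a) (hb : 0 ≤ b) (hab : b ≤ a) :
    |a * Real.tanh (θ * a) - b * Real.tanh (θ * b)| ≤ |θ| * |a ^ 2 - b ^ 2| := by
  have h1 : Real.tanh (θ * a) - Real.tanh (θ * b) ≤ θ * (a - b) := by
    have := (abs_le.1 (tanh_lipschitz (θ * a) (θ * b))).2
    have h2 : |θ * a - θ * b| = θ * (a - b) := by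
      rw [abs_of_nonneg (by nlinarith)]; ring
    linarith [h2 ▸ this]
  have h2 : Real.tanh (θ * b) ≤ θ * b := by
    have := (abs_le.1 (abs_tanh_le (θ * b))).2
    have : Real.tanh (θ * b) ≤ |θ * b| := this
    rwa [abs_of_nonneg (by positivity)] at this
  have h3 : 0 ≤ Real.tanh (θ * b) := by
    have := tanh_strictMono.monotone (show (0:ℝ) ≤ θ * b by positivity)
    simpa [Real.tanh_zero] using this
  have h4 : Real.tanh (θ * b) ≤ Real.tanh (θ * a) := by
    exact tanh_strictMono.monotone (by nlinarith)
  rw [abs_of_nonneg (by nlinarith : (0:ℝ) ≤ a ^ 2 - b ^ 2),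
    abs_of_nonneg hθ, abs_le]
  constructor <;> nlinarith

lemma core (θ a b : ℝ) (ha : 0 ≤ a) (hb : 0 ≤ b) :
    |a * Real.tanh (θ * a) - b * Real.tanh (θ * b)| ≤ |θ| * |a ^ 2 - b ^ 2| := by
  have key : ∀ s c d : ℝ, 0 ≤ s → 0 ≤ c → 0 ≤ d →
      |c * Real.tanh (s * c) - d * Real.tanh (s * d)| ≤ |s| * |c ^ 2 - d ^ 2| := by
    intro s c d hs hc hd
    rcases le_total d c with h | h
    · exact core_nonneg s c d hs hc hd h
    · rw [abs_sub_comm, abs_sub_comm (c ^ 2)]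
      exact core_nonneg s d c hs hd hc h
  rcases le_total 0 θ with hθ | hθ
  · exact key θ a b hθ ha hb
  · have := key (-θ) a b (by linarith) ha hb
    simp only [neg_mul, Real.tanh_neg, mul_neg, abs_neg] at this
    calc |a * Real.tanh (θ * a) - b * Real.tanh (θ * b)|
        = |-(a * Real.tanh (θ * a)) - -(b * Real.tanh (θ * b))| := by
          rw [← abs_neg]; ring_nf
      _ ≤ |θ| * |a ^ 2 - b ^ 2| := this

lemma continuous_tanh : Continuous Real.tanh :=
  Differentiable.continuous fun x => (hasDerivAt_tanh x).differentiableAt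

lemma sqrt_sq_max (u : ℝ) : Real.sqrt u ^ 2 = max u 0 := by
  rcases le_total 0 u with h | h
  · rw [Real.sq_sqrt h, max_eq_left h]
  · rw [Real.sqrt_eq_zero'.mpr h, max_eq_right h]
    norm_num

/-- For any two real random variables `X`, `Y` (with integrable squares), the supremum over
`θ` of `|E[Y·tanh(θY)] − E[X·tanh(θX)]|/|θ|` is at most `W₁(law X², law Y²)`. -/
theorem stmt_2 {Ω : Type*} [MeasurableSpace Ω] (μ : Measure Ω) [IsProbabilityMeasure μ]
    (X Y : Ω → ℝ) (hX : Measurable X) (hY : Measurable Y)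
    (hX2 : Integrable (fun ω => (X ω) ^ 2) μ)
    (hY2 : Integrable (fun ω => (Y ω) ^ 2) μ) :
    ∀ θ : ℝ,
      |(∫ ω, Y ω * Real.tanh (θ * Y ω) ∂μ) - ∫ ω, X ω * Real.tanh (θ * X ω) ∂μ|
        ≤ |θ| * W1 (μ.map (fun ω => (X ω) ^ 2)) (μ.map (fun ω => (Y ω) ^ 2)) := by
  intro θ
  rcases eq_or_ne θ 0 with rfl | hθ
  · simp [Real.tanh_zero]
  set g : ℝ → ℝ := fun t => Real.sqrt t * Real.tanh (θ * Real.sqrt t) with hg_def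
  have hg_cont : Continuous g := by
    exact Real.continuous_sqrt.mul (continuous_tanh.comp
      (continuous_const.mul Real.continuous_sqrt))
  have hgl : ∀ s t : ℝ, |g s - g t| ≤ |θ| * |s - t| := by
    intro s t
    have h := core θ (Real.sqrt s) (Real.sqrt t) (Real.sqrt_nonneg s) (Real.sqrt_nonneg t)
    refine h.trans (mul_le_mul_of_nonneg_left ?_ (abs_nonneg θ))
    rw [sqrt_sq_max, sqrt_sq_max]
    exact abs_max_sub_max_le_abs s t 0
  have hg_zero : g 0 = 0 := by simp [hg_def]
  have hg_bound : ∀ t : ℝ, |g t| ≤ |θ| * |t| := fun t => by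
    simpa [hg_zero] using hgl t 0
  have hgx : ∀ x : ℝ, x * Real.tanh (θ * x) = g (x ^ 2) := by
    intro x
    simp only [hg_def, Real.sqrt_sq_eq_abs]
    rcases le_total 0 x with h | h
    · rw [abs_of_nonneg h]
    · rw [abs_of_nonpos h, mul_neg, Real.tanh_neg]; ring
  set ν₁ := μ.map (fun ω => (X ω) ^ 2) with hν₁
  set ν₂ := μ.map (fun ω => (Y ω) ^ 2) with hν₂
  have hmX : AEMeasurable (fun ω => (X ω) ^ 2) μ := (hX.pow_const 2).aemeasurable
  have hmY : AEMeasurable (fun ω => (Y ω) ^ 2) μ := (hY.pow_const 2).aemeasurable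
  haveI : IsProbabilityMeasure ν₁ := Measure.isProbabilityMeasure_map hmX
  haveI : IsProbabilityMeasure ν₂ := Measure.isProbabilityMeasure_map hmY
  have hid1 : Integrable (fun t : ℝ => t) ν₁ :=
    (integrable_map_measure aestronglyMeasurable_id hmX).2 hX2
  have hid2 : Integrable (fun t : ℝ => t) ν₂ :=
    (integrable_map_measure aestronglyMeasurable_id hmY).2 hY2
  have hEX : ∫ ω, X ω * Real.tanh (θ * X ω) ∂μ = ∫ t, g t ∂ν₁ := by
    rw [hν₁, integral_map hmX hg_cont.aestronglyMeasurable]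
    exact integral_congr_ae (Filter.Eventually.of_forall fun ω => hgx (X ω))
  have hEY : ∫ ω, Y ω * Real.tanh (θ * Y ω) ∂μ = ∫ t, g t ∂ν₂ := by
    rw [hν₂, integral_map hmY hg_cont.aestronglyMeasurable]
    exact integral_congr_ae (Filter.Eventually.of_forall fun ω => hgx (Y ω))
  rw [hEX, hEY]
  set D := |(∫ t, g t ∂ν₂) - ∫ t, g t ∂ν₁| with hD
  -- the set of couplings is nonempty
  have hne : {r : ℝ | ∃ π : Measure (ℝ × ℝ),
      π.map Prod.fst = ν₁ ∧ π.map Prod.snd = ν₂ ∧ r = ∫ p, |p.1 - p.2| ∂π}.Nonempty := by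
    refine ⟨∫ p, |p.1 - p.2| ∂(ν₁.prod ν₂), ν₁.prod ν₂, ?_, ?_, rfl⟩
    · rw [Measure.map_fst_prod]; simp
    · rw [Measure.map_snd_prod]; simp
  -- main bound for each coupling
  have key : ∀ r ∈ {r : ℝ | ∃ π : Measure (ℝ × ℝ),
      π.map Prod.fst = ν₁ ∧ π.map Prod.snd = ν₂ ∧ r = ∫ p, |p.1 - p.2| ∂π},
      D ≤ |θ| * r := by
    rintro r ⟨π, h1, h2, rfl⟩
    have hπ1 : Integrable (fun p : ℝ × ℝ => p.1) π := by
      have := hid1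
      rw [← h1] at this
      exact (integrable_map_measure aestronglyMeasurable_id
        measurable_fst.aemeasurable).1 this
    have hπ2 : Integrable (fun p : ℝ × ℝ => p.2) π := by
      have := hid2
      rw [← h2] at this
      exact (integrable_map_measure aestronglyMeasurable_id
        measurable_snd.aemeasurable).1 this
    have hgf1 : Integrable (fun p : ℝ × ℝ => g p.1) π := by
      refine Integrable.mono' (hπ1.abs.const_mul |θ|)
        ((hg_cont.comp continuous_fst).aestronglyMeasurable)
        (Filter.Eventually.of_forall fun p => ?_)
      simpa [Real.norm_eq_abs] using hg_bound p.1
    have hgf2 : Integrable (fun p : ℝ × ℝ => g p.2) π := by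
      refine Integrable.mono' (hπ2.abs.const_mul |θ|)
        ((hg_cont.comp continuous_snd).aestronglyMeasurable)
        (Filter.Eventually.of_forall fun p => ?_)
      simpa [Real.norm_eq_abs] using hg_bound p.2
    have e1 : ∫ t, g t ∂ν₁ = ∫ p, g p.1 ∂π := by
      rw [← h1, integral_map measurable_fst.aemeasurable hg_cont.aestronglyMeasurable]
    have e2 : ∫ t, g t ∂ν₂ = ∫ p, g p.2 ∂π := by
      rw [← h2, integral_map measurable_snd.aemeasurable hg_cont.aestronglyMeasurable]
    rw [hD, e1, e2, ← integral_sub hgf2 hgf1]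
    calc |∫ p, (g p.2 - g p.1) ∂π| ≤ ∫ p, |g p.2 - g p.1| ∂π := by
          simpa [Real.norm_eq_abs] using
            norm_integral_le_integral_norm (fun p : ℝ × ℝ => g p.2 - g p.1) (μ := π)
      _ ≤ ∫ p, |θ| * |p.1 - p.2| ∂π := by
          refine integral_mono (hgf2.sub hgf1).abs ((hπ1.sub hπ2).abs.const_mul |θ|)
            fun p => ?_
          calc |g p.2 - g p.1| ≤ |θ| * |p.2 - p.1| := hgl p.2 p.1
            _ = |θ| * |p.1 - p.2| := by rw [abs_sub_comm]
      _ = |θ| * ∫ p, |p.1 - p.2| ∂π := integral_const_mul _ _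
  -- conclude via the infimum
  have hθpos : (0:ℝ) < |θ| := abs_pos.2 hθ
  have h2 : D / |θ| ≤ W1 ν₁ ν₂ := by
    refine le_csInf hne fun r hr => ?_
    rw [div_le_iff₀ hθpos]
    calc D ≤ |θ| * r := key r hr
      _ = r * |θ| := mul_comm _ _
  calc D = |θ| * (D / |θ|) := by field_simp
    _ ≤ |θ| * W1 ν₁ ν₂ := mul_le_mul_of_nonneg_left h2 (abs_nonneg θ)
end

section
/- For all t > 0 and Z ∼ N(0,1), E[1/(t² + Z²)] = Φ̄(t)/(t·φ(t)). -/
open MeasureTheory ProbabilityTheory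

/-- The standard normal density `φ`. -/
noncomputable def stdPdf (x : ℝ) : ℝ :=
  (Real.sqrt (2 * Real.pi))⁻¹ * Real.exp (-x ^ 2 / 2)

/-- The standard normal tail probability `Φ̄(x) = ∫_x^∞ φ`. -/
noncomputable def stdTail (x : ℝ) : ℝ := ∫ t in Set.Ioi x, stdPdf t

open Real Set Filter Topology

lemma stdPdf_pos (x : ℝ) : 0 < stdPdf x := by
  unfold stdPdf
  positivity

lemma stdPdf_eq (x : ℝ) : stdPdf x = (Real.sqrt (2 * π))⁻¹ * rexp (-(1/2) * x ^ 2) := by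
  unfold stdPdf; ring_nf

lemma continuous_stdPdf : Continuous stdPdf := by
  unfold stdPdf
  fun_prop

lemma integrable_stdPdf : Integrable stdPdf := by
  have : Integrable (fun x : ℝ => (Real.sqrt (2 * π))⁻¹ * rexp (-(1/2) * x ^ 2)) :=
    (integrable_exp_neg_mul_sq (by norm_num : (0:ℝ) < 1/2)).const_mul _
  exact this.congr (Filter.Eventually.of_forall fun x => (stdPdf_eq x).symm)

lemma integral_stdPdf : ∫ x, stdPdf x = 1 := by
  have h := integral_gaussian (1/2 : ℝ)
  simp only [funext stdPdf_eq]
  rw [MeasureTheory.integral_const_mul, h]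
  rw [show π / (1/2 : ℝ) = 2 * π by ring]
  rw [inv_mul_cancel₀ (by positivity : Real.sqrt (2*π) ≠ 0)]

lemma hasDerivAt_stdPdf (x : ℝ) : HasDerivAt stdPdf (-x * stdPdf x) x := by
  unfold stdPdf
  have h1 : HasDerivAt (fun y : ℝ => -y ^ 2 / 2) (-x) x := by
    have : HasDerivAt (fun y : ℝ => -y ^ 2 / 2) (-(2 * x ^ (2-1)) / 2) x := by
      exact ((hasDerivAt_pow 2 x).neg).div_const 2
    norm_num at this
    convert this using 1
    ring
  have h2 := (h1.exp).const_mul (Real.sqrt (2 * π))⁻¹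
  refine h2.congr_deriv ?_
  ring

lemma stdPdf_le (x : ℝ) : stdPdf x ≤ (Real.sqrt (2 * π))⁻¹ := by
  unfold stdPdf
  have h : rexp (-x ^ 2 / 2) ≤ 1 := by
    rw [Real.exp_le_one_iff]
    nlinarith [sq_nonneg x]
  nlinarith [Real.sqrt_pos.mpr (by positivity : (0:ℝ) < 2*π), inv_pos.mpr (Real.sqrt_pos.mpr (by positivity : (0:ℝ) < 2*π))]

/-- integrable: stdPdf times a bounded continuous function -/
lemma integrable_stdPdf_mul {k : ℝ → ℝ} (hk : Continuous k) {C : ℝ}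
    (hC : ∀ z, |k z| ≤ C) : Integrable (fun z => stdPdf z * k z) := by
  refine Integrable.mono (integrable_stdPdf.const_mul C)
    ((continuous_stdPdf.mul hk).aestronglyMeasurable) ?_
  refine Filter.Eventually.of_forall fun z => ?_
  have h0 : (0:ℝ) ≤ C := le_trans (abs_nonneg _) (hC 0)
  have hp := (stdPdf_pos z).le
  rw [Real.norm_eq_abs, Real.norm_eq_abs, abs_mul, abs_of_nonneg hp,
    abs_of_nonneg (by positivity : (0:ℝ) ≤ C * stdPdf z)]
  calc stdPdf z * |k z| ≤ stdPdf z * C := by nlinarith [hC z]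
    _ = C * stdPdf z := by ring

/-- `g t = E[t/(t²+Z²)]` written against Lebesgue measure. -/
noncomputable def gfun (t : ℝ) : ℝ := ∫ z, stdPdf z * (t / (t ^ 2 + z ^ 2))

lemma sq_add_pos {t : ℝ} (ht : 0 < t) (z : ℝ) : 0 < t ^ 2 + z ^ 2 := by positivity

lemma abs_ratio_le {t z : ℝ} (ht : 0 < t) : |(z ^ 2 - t ^ 2) / (t ^ 2 + z ^ 2) ^ 2| ≤ t⁻¹ ^ 2 := by
  have h1 : (0:ℝ) < t ^ 2 + z ^ 2 := sq_add_pos ht z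
  rw [abs_div, abs_of_nonneg (by positivity : (0:ℝ) ≤ (t^2+z^2)^2)]
  have h2 : |z ^ 2 - t ^ 2| ≤ t ^ 2 + z ^ 2 := by
    rcases abs_cases (z ^ 2 - t ^ 2) with ⟨h, _⟩ | ⟨h, _⟩ <;> rw [h] <;> nlinarith [sq_nonneg t, sq_nonneg z]
  calc |z ^ 2 - t ^ 2| / (t ^ 2 + z ^ 2) ^ 2 ≤ (t ^ 2 + z ^ 2) / (t ^ 2 + z ^ 2) ^ 2 := by
        apply div_le_div_of_nonneg_right h2 (by positivity) |>.trans_eq rfl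
    _ = (t ^ 2 + z ^ 2)⁻¹ := by field_simp
    _ ≤ t⁻¹ ^ 2 := by
        rw [inv_pow, inv_le_inv₀ (by positivity) (by positivity)]
        nlinarith [sq_nonneg z]

lemma abs_t_ratio_le {t : ℝ} (ht : 0 < t) (z : ℝ) : |t / (t ^ 2 + z ^ 2)| ≤ t⁻¹ := by
  have h1 := sq_add_pos ht z
  rw [abs_of_nonneg (by positivity)]
  rw [div_le_iff₀ h1, inv_mul_eq_div, le_div_iff₀ ht]
  nlinarith [sq_nonneg z]

lemma hasDerivAt_inner {z : ℝ} {x : ℝ} (hx : 0 < x) :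
    HasDerivAt (fun y : ℝ => stdPdf z * (y / (y ^ 2 + z ^ 2)))
      (stdPdf z * ((z ^ 2 - x ^ 2) / (x ^ 2 + z ^ 2) ^ 2)) x := by
  have hne : x ^ 2 + z ^ 2 ≠ 0 := (sq_add_pos hx z).ne'
  have hd : HasDerivAt (fun y : ℝ => y ^ 2 + z ^ 2) (2 * x) x := by
    simpa using ((hasDerivAt_pow 2 x).add_const (z ^ 2))
  have h := (hasDerivAt_id x).div hd hne
  have h2 : HasDerivAt (fun y : ℝ => y / (y ^ 2 + z ^ 2))
      ((z ^ 2 - x ^ 2) / (x ^ 2 + z ^ 2) ^ 2) x := by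
    refine h.congr_deriv ?_
    simp only [id]
    ring
  exact h2.const_mul (stdPdf z)

lemma hasDerivAt_gfun {t : ℝ} (ht : 0 < t) :
    HasDerivAt gfun (∫ z, stdPdf z * ((z ^ 2 - t ^ 2) / (t ^ 2 + z ^ 2) ^ 2)) t := by
  have hball : ∀ x ∈ Metric.ball t (t/2), 0 < x := by
    intro x hx
    rw [Metric.mem_ball, Real.dist_eq] at hx
    rcases abs_lt.mp hx with ⟨h1, _⟩
    linarith
  have key := hasDerivAt_integral_of_dominated_loc_of_deriv_le (μ := volume)
    (F := fun x z => stdPdf z * (x / (x ^ 2 + z ^ 2)))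
    (F' := fun x z => stdPdf z * ((z ^ 2 - x ^ 2) / (x ^ 2 + z ^ 2) ^ 2))
    (x₀ := t) (s := Metric.ball t (t/2)) (bound := fun z => stdPdf z * (t/2)⁻¹ ^ 2)
    (Metric.ball_mem_nhds t (by linarith))
    ?_ ?_ ?_ ?_ ?_ ?_
  · exact key.2
  · -- measurability of F x near t
    filter_upwards [eventually_gt_nhds (by linarith : (0:ℝ) < t)] with x hx
    exact (continuous_stdPdf.mul (continuous_const.div
      (by fun_prop) (fun z => (sq_add_pos hx z).ne'))).aestronglyMeasurable
  · exact integrable_stdPdf_mul (continuous_const.div (by fun_prop)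
      (fun z => (sq_add_pos ht z).ne')) (abs_t_ratio_le ht)
  · exact (continuous_stdPdf.mul ((by fun_prop : Continuous fun z : ℝ => z ^ 2 - t ^ 2).div
      (by fun_prop) (fun z => pow_ne_zero 2 (sq_add_pos ht z).ne'))).aestronglyMeasurable
  · refine Filter.Eventually.of_forall fun z => fun x hx => ?_
    have hx0 := hball x hx
    have hx2 : t/2 ≤ x := by
      rw [Metric.mem_ball, Real.dist_eq] at hx
      rcases abs_lt.mp hx with ⟨h1, _⟩
      linarith
    rw [Real.norm_eq_abs, abs_mul, abs_of_nonneg (stdPdf_pos z).le]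
    have h1 : |(z ^ 2 - x ^ 2) / (x ^ 2 + z ^ 2) ^ 2| ≤ x⁻¹ ^ 2 := abs_ratio_le hx0
    have h2 : x⁻¹ ^ 2 ≤ (t/2)⁻¹ ^ 2 := by
      have hi : x⁻¹ ≤ (t/2)⁻¹ := by
        rw [inv_le_inv₀ hx0 (by linarith : (0:ℝ) < t/2)]; exact hx2
      exact pow_le_pow_left₀ (by positivity) hi 2
    nlinarith [stdPdf_pos z, abs_nonneg ((z ^ 2 - x ^ 2) / (x ^ 2 + z ^ 2) ^ 2)]
  · exact integrable_stdPdf.mul_const _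
  · exact Filter.Eventually.of_forall fun z => fun x hx => hasDerivAt_inner (hball x hx)

lemma abs_z_ratio_le {t : ℝ} (ht : 0 < t) (z : ℝ) : |z / (t ^ 2 + z ^ 2)| ≤ (2*t)⁻¹ := by
  have h1 := sq_add_pos ht z
  rw [abs_div, abs_of_nonneg h1.le, div_le_iff₀ h1, inv_mul_eq_div, le_div_iff₀ (by linarith)]
  nlinarith [sq_nonneg (|z| - t), sq_abs z]

lemma tendsto_stdPdf_atTop : Tendsto stdPdf atTop (𝓝 0) := by
  have h1 : Tendsto (fun z : ℝ => -z ^ 2 / 2) atTop atBot := by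
    apply Filter.Tendsto.atBot_div_const (by norm_num : (0:ℝ) < 2)
    exact tendsto_neg_atTop_atBot.comp (tendsto_pow_atTop (two_ne_zero))
  have h2 := Real.tendsto_exp_atBot.comp h1
  have h3 := h2.const_mul (Real.sqrt (2 * π))⁻¹
  rw [mul_zero] at h3
  exact h3

lemma tendsto_stdPdf_atBot : Tendsto stdPdf atBot (𝓝 0) := by
  have h1 : Tendsto (fun z : ℝ => -z ^ 2 / 2) atBot atBot := by
    apply Filter.Tendsto.atBot_div_const (by norm_num : (0:ℝ) < 2)
    have hsq : Tendsto (fun z : ℝ => z ^ 2) atBot atTop := by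
      have := (tendsto_pow_atTop (two_ne_zero : 2 ≠ 0)).comp
        (tendsto_neg_atBot_atTop : Tendsto (fun z : ℝ => -z) atBot atTop)
      refine this.congr fun z => ?_
      simp [Function.comp, neg_pow]
    exact tendsto_neg_atTop_atBot.comp hsq
  have h2 := Real.tendsto_exp_atBot.comp h1
  have h3 := h2.const_mul (Real.sqrt (2 * π))⁻¹
  rw [mul_zero] at h3
  exact h3

lemma ibp {t : ℝ} (ht : 0 < t) :
    ∫ z, stdPdf z * ((t ^ 2 - z ^ 2) / (t ^ 2 + z ^ 2) ^ 2)
      = ∫ z, stdPdf z * (z ^ 2 / (t ^ 2 + z ^ 2)) := by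
  set u : ℝ → ℝ := fun z => stdPdf z * (z / (t ^ 2 + z ^ 2)) with hu
  set w : ℝ → ℝ := fun z =>
    stdPdf z * ((t ^ 2 - z ^ 2) / (t ^ 2 + z ^ 2) ^ 2 - z ^ 2 / (t ^ 2 + z ^ 2)) with hw
  have hderiv : ∀ x : ℝ, HasDerivAt u (w x) x := by
    intro x
    have hne : t ^ 2 + x ^ 2 ≠ 0 := (sq_add_pos ht x).ne'
    have hd : HasDerivAt (fun z : ℝ => t ^ 2 + z ^ 2) (2 * x) x := by
      simpa using ((hasDerivAt_pow 2 x).const_add (t ^ 2))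
    have hinner : HasDerivAt (fun z : ℝ => z / (t ^ 2 + z ^ 2))
        ((t ^ 2 - x ^ 2) / (t ^ 2 + x ^ 2) ^ 2) x := by
      refine ((hasDerivAt_id x).div hd hne).congr_deriv ?_
      simp only [id]
      ring
    have := (hasDerivAt_stdPdf x).mul hinner
    refine this.congr_deriv ?_
    simp only [hw]
    field_simp
    ring
  have hwint : Integrable w := by
    apply integrable_stdPdf_mul (C := t⁻¹ ^ 2 + 1)
    case hk =>
      apply Continuous.sub
      · exact (by fun_prop : Continuous fun z : ℝ => t ^ 2 - z ^ 2).div (by fun_prop)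
          (fun z => pow_ne_zero 2 (sq_add_pos ht z).ne')
      · exact (by fun_prop : Continuous fun z : ℝ => z ^ 2).div (by fun_prop)
          (fun z => (sq_add_pos ht z).ne')
    case hC =>
      intro z
      refine le_trans (abs_sub ((t ^ 2 - z ^ 2) / (t ^ 2 + z ^ 2) ^ 2) (z ^ 2 / (t ^ 2 + z ^ 2))) ?_
      have h1 : |(t ^ 2 - z ^ 2) / (t ^ 2 + z ^ 2) ^ 2| ≤ t⁻¹ ^ 2 := by
        rw [abs_div, abs_sub_comm, ← abs_div]
        exact abs_ratio_le ht
      have h2 : |z ^ 2 / (t ^ 2 + z ^ 2)| ≤ 1 := by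
        have h0 := sq_add_pos ht z
        rw [abs_div, abs_of_nonneg h0.le, div_le_one h0, abs_of_nonneg (sq_nonneg z)]
        nlinarith [sq_nonneg t]
      linarith
  have hbnd : ∀ z, ‖u z‖ ≤ stdPdf z * (2*t)⁻¹ := by
    intro z
    rw [Real.norm_eq_abs, abs_mul, abs_of_nonneg (stdPdf_pos z).le]
    exact mul_le_mul_of_nonneg_left (abs_z_ratio_le ht z) (stdPdf_pos z).le
  have hutop : Tendsto u atTop (𝓝 0) :=
    squeeze_zero_norm hbnd (by simpa using tendsto_stdPdf_atTop.mul_const (2*t)⁻¹)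
  have hubot : Tendsto u atBot (𝓝 0) :=
    squeeze_zero_norm hbnd (by simpa using tendsto_stdPdf_atBot.mul_const (2*t)⁻¹)
  have hIoi : ∫ x in Ioi (0:ℝ), w x = 0 - u 0 :=
    integral_Ioi_of_hasDerivAt_of_tendsto' (fun x _ => hderiv x) hwint.integrableOn hutop
  have hIic : ∫ x in Iic (0:ℝ), w x = u 0 - 0 :=
    integral_Iic_of_hasDerivAt_of_tendsto' (fun x _ => hderiv x) hwint.integrableOn hubot
  have htotal : ∫ x, w x = 0 := by
    rw [← intervalIntegral.integral_Iic_add_Ioi hwint.integrableOn hwint.integrableOn, hIoi, hIic]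
    ring
  have hA : Integrable (fun z => stdPdf z * ((t ^ 2 - z ^ 2) / (t ^ 2 + z ^ 2) ^ 2)) := by
    apply integrable_stdPdf_mul
    · exact (by fun_prop : Continuous fun z : ℝ => t ^ 2 - z ^ 2).div (by fun_prop)
        (fun z => pow_ne_zero 2 (sq_add_pos ht z).ne')
    · intro z
      rw [abs_div, abs_sub_comm, ← abs_div]
      exact abs_ratio_le ht
  have hB : Integrable (fun z => stdPdf z * (z ^ 2 / (t ^ 2 + z ^ 2))) := by
    apply integrable_stdPdf_mul
    · exact (by fun_prop : Continuous fun z : ℝ => z ^ 2).div (by fun_prop)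
        (fun z => (sq_add_pos ht z).ne')
    · intro z
      have h0 := sq_add_pos ht z
      rw [abs_div, abs_of_nonneg h0.le, div_le_one h0, abs_of_nonneg (sq_nonneg z)]
      nlinarith [sq_nonneg t]
  have : ∫ x, w x = (∫ z, stdPdf z * ((t ^ 2 - z ^ 2) / (t ^ 2 + z ^ 2) ^ 2))
      - ∫ z, stdPdf z * (z ^ 2 / (t ^ 2 + z ^ 2)) := by
    rw [← integral_sub hA hB]
    congr 1
    funext z
    simp only [hw]
    ring
  linarith [this, htotal]

lemma integrable_gfun_integrand {t : ℝ} (ht : 0 < t) :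
    Integrable (fun z => stdPdf z * (t / (t ^ 2 + z ^ 2))) :=
  integrable_stdPdf_mul (continuous_const.div (by fun_prop)
    (fun z => (sq_add_pos ht z).ne')) (abs_t_ratio_le ht)

lemma hasDerivAt_gfun' {t : ℝ} (ht : 0 < t) : HasDerivAt gfun (t * gfun t - 1) t := by
  have h := hasDerivAt_gfun ht
  have hJ : Integrable (fun z => stdPdf z * (z ^ 2 / (t ^ 2 + z ^ 2))) := by
    apply integrable_stdPdf_mul (C := 1)
    · exact (by fun_prop : Continuous fun z : ℝ => z ^ 2).div (by fun_prop)
        (fun z => (sq_add_pos ht z).ne')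
    · intro z
      have h0 := sq_add_pos ht z
      rw [abs_div, abs_of_nonneg h0.le, div_le_one h0, abs_of_nonneg (sq_nonneg z)]
      nlinarith [sq_nonneg t]
  have hT : Integrable (fun z => stdPdf z * (t ^ 2 / (t ^ 2 + z ^ 2))) := by
    apply integrable_stdPdf_mul (C := 1)
    · exact continuous_const.div (by fun_prop) (fun z => (sq_add_pos ht z).ne')
    · intro z
      have h0 := sq_add_pos ht z
      rw [abs_div, abs_of_nonneg h0.le, div_le_one h0, abs_of_nonneg (sq_nonneg t)]
      nlinarith [sq_nonneg z]
  have e1 : (∫ z, stdPdf z * ((z ^ 2 - t ^ 2) / (t ^ 2 + z ^ 2) ^ 2))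
      = -∫ z, stdPdf z * (z ^ 2 / (t ^ 2 + z ^ 2)) := by
    rw [← ibp ht, ← integral_neg]
    congr 1
    funext z
    ring
  have e2 : t * gfun t - 1 = -∫ z, stdPdf z * (z ^ 2 / (t ^ 2 + z ^ 2)) := by
    have ht1 : t * gfun t = ∫ z, stdPdf z * (t ^ 2 / (t ^ 2 + z ^ 2)) := by
      unfold gfun
      rw [← integral_const_mul]
      congr 1
      funext z
      ring
    rw [ht1, ← integral_stdPdf, ← integral_neg, ← integral_sub hT integrable_stdPdf]
    congr 1
    funext z
    have h0 := (sq_add_pos ht z).ne'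
    field_simp
    ring
  rw [e2, ← e1]
  exact h

lemma stdTail_eq (x : ℝ) : stdTail x = stdTail 0 - ∫ s in (0:ℝ)..x, stdPdf s := by
  have hx : ∀ y : ℝ, stdTail y = (∫ z, stdPdf z) - ∫ z in Iic y, stdPdf z := by
    intro y
    have := intervalIntegral.integral_Iic_add_Ioi (b := y) (f := stdPdf) (μ := volume)
      integrable_stdPdf.integrableOn integrable_stdPdf.integrableOn
    unfold stdTail
    linarith
  have h := intervalIntegral.integral_Iic_sub_Iic (a := (0:ℝ)) (b := x) (f := stdPdf)
    (μ := volume) integrable_stdPdf.integrableOn integrable_stdPdf.integrableOn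
  rw [hx x, hx 0, ← h]
  ring

lemma hasDerivAt_stdTail (x : ℝ) : HasDerivAt stdTail (-stdPdf x) x := by
  have h : HasDerivAt (fun y => ∫ s in (0:ℝ)..y, stdPdf s) (stdPdf x) x :=
    intervalIntegral.integral_hasDerivAt_right (integrable_stdPdf.intervalIntegrable)
      (continuous_stdPdf.stronglyMeasurable.stronglyMeasurableAtFilter)
      continuous_stdPdf.continuousAt
  have h2 := h.const_sub (stdTail 0)
  rw [show stdTail = fun y => stdTail 0 - ∫ s in (0:ℝ)..y, stdPdf s from funext stdTail_eq]
  exact h2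

lemma tendsto_stdTail_atTop : Tendsto stdTail atTop (𝓝 0) := by
  have hcov : AECover (volume : Measure ℝ) atTop (fun i : ℝ => Iic i) :=
    aecover_Iic tendsto_id
  have h1 := hcov.integral_tendsto_of_countably_generated integrable_stdPdf
  rw [integral_stdPdf] at h1
  have h2 : Tendsto (fun y : ℝ => (∫ z, stdPdf z) - ∫ z in Iic y, stdPdf z) atTop (𝓝 0) := by
    rw [integral_stdPdf]
    simpa using ((tendsto_const_nhds : Tendsto (fun _ : ℝ => (1:ℝ)) atTop (𝓝 1)).sub h1)
  refine h2.congr fun y => ?_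
  have := intervalIntegral.integral_Iic_add_Ioi (b := y) (f := stdPdf) (μ := volume)
    integrable_stdPdf.integrableOn integrable_stdPdf.integrableOn
  unfold stdTail
  linarith

lemma abs_gfun_le {s : ℝ} (hs : 0 < s) : |gfun s| ≤ s⁻¹ := by
  have h1 : ‖∫ z, stdPdf z * (s / (s ^ 2 + z ^ 2))‖ ≤ ∫ z, stdPdf z * s⁻¹ := by
    refine (norm_integral_le_integral_norm (fun z => stdPdf z * (s / (s ^ 2 + z ^ 2)))).trans ?_
    refine integral_mono (integrable_gfun_integrand hs).norm (integrable_stdPdf.mul_const _) ?_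
    intro z
    show ‖stdPdf z * (s / (s ^ 2 + z ^ 2))‖ ≤ stdPdf z * s⁻¹
    rw [Real.norm_eq_abs, abs_mul, abs_of_nonneg (stdPdf_pos z).le]
    exact mul_le_mul_of_nonneg_left (abs_t_ratio_le hs z) (stdPdf_pos z).le
  rw [integral_mul_const, integral_stdPdf, one_mul, Real.norm_eq_abs] at h1
  exact h1

lemma tendsto_gfun_mul_stdPdf : Tendsto (fun s => gfun s * stdPdf s) atTop (𝓝 0) := by
  refine squeeze_zero_norm' (a := fun s : ℝ => s⁻¹ * (Real.sqrt (2 * π))⁻¹) ?_ ?_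
  · filter_upwards [eventually_gt_atTop (0:ℝ)] with s hs
    rw [Real.norm_eq_abs, abs_mul, abs_of_nonneg (stdPdf_pos s).le]
    have h1 := abs_gfun_le hs
    have h2 := stdPdf_le s
    have h3 : (0:ℝ) ≤ s⁻¹ := by positivity
    nlinarith [abs_nonneg (gfun s), (stdPdf_pos s).le]
  · simpa using tendsto_inv_atTop_zero.mul_const (Real.sqrt (2 * π))⁻¹

lemma hfun_const {a b : ℝ} (ha : 0 < a) (hab : a ≤ b) :
    gfun a * stdPdf a - stdTail a = gfun b * stdPdf b - stdTail b := by
  have hd : ∀ x ∈ Set.uIcc a b, HasDerivAt (fun s => gfun s * stdPdf s - stdTail s) ((fun _ : ℝ => (0:ℝ)) x) x := by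
    intro x hx
    rw [uIcc_of_le hab] at hx
    have hx0 : 0 < x := lt_of_lt_of_le ha hx.1
    have h1 := ((hasDerivAt_gfun' hx0).mul (hasDerivAt_stdPdf x)).sub (hasDerivAt_stdTail x)
    refine h1.congr_deriv ?_
    ring
  have h := intervalIntegral.integral_eq_sub_of_hasDerivAt hd
    (intervalIntegrable_const)
  simp only [intervalIntegral.integral_const, smul_zero] at h
  linarith

lemma gfun_mul_stdPdf_eq {t : ℝ} (ht : 0 < t) : gfun t * stdPdf t = stdTail t := by
  have hlim : Tendsto (fun s => gfun s * stdPdf s - stdTail s) atTop (𝓝 0) := by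
    simpa using tendsto_gfun_mul_stdPdf.sub tendsto_stdTail_atTop
  have hconst : Tendsto (fun _ : ℝ => gfun t * stdPdf t - stdTail t) atTop (𝓝 0) := by
    refine hlim.congr' ?_
    filter_upwards [eventually_ge_atTop t] with s hs
    exact (hfun_const ht hs).symm
  have := tendsto_nhds_unique hconst tendsto_const_nhds
  linarith

/-- For `t > 0` and `Z ∼ N(0,1)`, `E[1/(t² + Z²)] = Φ̄(t)/(t·φ(t))`. -/
theorem stmt_11 (t : ℝ) (ht : 0 < t) :
    (∫ z, 1 / (t ^ 2 + z ^ 2) ∂(gaussianReal 0 1)) = stdTail t / (t * stdPdf t) := by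
  have hconv : (∫ z, 1 / (t ^ 2 + z ^ 2) ∂(gaussianReal 0 1))
      = ∫ z, stdPdf z * (1 / (t ^ 2 + z ^ 2)) := by
    rw [gaussianReal_of_var_ne_zero 0 one_ne_zero]
    rw [show gaussianPDF 0 1 = fun x => (((gaussianPDFReal 0 1 x).toNNReal : NNReal) : ENNReal)
      from rfl]
    rw [integral_withDensity_eq_integral_smul ((measurable_gaussianPDFReal 0 1).real_toNNReal)]
    congr 1
    funext z
    rw [NNReal.smul_def, Real.coe_toNNReal _ (gaussianPDFReal_nonneg 0 1 z)]
    have hpdf : gaussianPDFReal 0 1 z = stdPdf z := by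
      unfold gaussianPDFReal stdPdf
      push_cast
      norm_num
    rw [hpdf]
    rfl
  have hkey := gfun_mul_stdPdf_eq ht
  have hint : (∫ z, stdPdf z * (1 / (t ^ 2 + z ^ 2))) = gfun t / t := by
    rw [eq_div_iff ht.ne']
    unfold gfun
    rw [← integral_mul_const]
    congr 1
    funext z
    ring
  rw [hconv, hint, ← hkey]
  have hp := stdPdf_pos t
  field_simp
end
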